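/- No root α of a reduced crystallographic root system Φ is divisible by an integer m > 1 within the root lattice ℤΦ. -/

import Mathlib

/-- A reduced crystallographic root system, presented concretely via a positive definite
symmetric bilinear form `B` on a rational vector space. -/
structure ReducedCrystRootSystem (V : Type*) [AddCommGroup V] [Module ℚ V]
    (B : V →ₗ[ℚ] V →ₗ[ℚ] ℚ) where
  Φ : Finset V
  symm : ∀ x y : V, B x y = B y x
  posdef : ∀ x : V, x ≠ 0 → 0 < B x x
  span_eq : Submodule.span ℚ (Φ : Set V) = ⊤
  zero_not_mem : (0 : V) ∉ Φ
  reflect_mem : ∀ α ∈ Φ, ∀ β ∈ Φ, β - (2 * B β α / B α α) • α ∈ Φ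
  crystallographic : ∀ α ∈ Φ, ∀ β ∈ Φ, ∃ z : ℤ, 2 * B β α / B α α = (z : ℚ)
  reduced : ∀ α ∈ Φ, ∀ c : ℚ, c • α ∈ Φ → c = 1 ∨ c = -1

open Finset in
/-- Avoidance of finitely many hyperplanes. -/
lemma rcrs_avoid {V : Type*} [AddCommGroup V] [Module ℚ V] (s : Finset (V →ₗ[ℚ] ℚ))
    (hs : ∀ f ∈ s, f ≠ 0) : ∃ y : V, ∀ f ∈ s, f y ≠ 0 := by
  classical
  induction s using Finset.induction with
  | empty => exact ⟨0, by simp⟩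
  | @insert f s hf ih =>
    obtain ⟨y, hy⟩ := ih (fun g hg => hs g (mem_insert_of_mem hg))
    have hfne : f ≠ 0 := hs f (mem_insert_self _ _)
    obtain ⟨u, hu⟩ : ∃ u, f u ≠ 0 := by
      by_contra h; push_neg at h; exact hfne (LinearMap.ext h)
    obtain ⟨t, ht⟩ : ∃ t : ℚ, t ∉ (insert f s).image (fun g => -g y / g u) :=
      Infinite.exists_notMem_finset _
    refine ⟨t • u + y, ?_⟩
    intro g hg hzero
    have hgy : t * g u + g y = 0 := by
      have := hzero; simpa [map_add, map_smul, smul_eq_mul] using this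
    by_cases hgu : g u = 0
    · rcases mem_insert.1 hg with rfl | hgs
      · exact hu hgu
      · apply hy g hgs
        rw [hgu] at hgy; linarith
    · apply ht
      refine mem_image.2 ⟨g, hg, ?_⟩
      field_simp
      linarith [hgy]

namespace ReducedCrystRootSystem

variable {V : Type*} [AddCommGroup V] [Module ℚ V] {B : V →ₗ[ℚ] V →ₗ[ℚ] ℚ}
  (RS : ReducedCrystRootSystem V B)

lemma root_ne_zero {γ : V} (h : γ ∈ RS.Φ) : γ ≠ 0 := fun hγ => RS.zero_not_mem (hγ ▸ h)

lemma posB {γ : V} (h : γ ∈ RS.Φ) : 0 < B γ γ := RS.posdef γ (RS.root_ne_zero h)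

lemma neg_mem {γ : V} (h : γ ∈ RS.Φ) : -γ ∈ RS.Φ := by
  have hne : B γ γ ≠ 0 := (RS.posB h).ne'
  have h2 : 2 * B γ γ / B γ γ = 2 := by
    field_simp
  have := RS.reflect_mem γ h γ h
  rw [h2] at this
  convert this using 1
  module

lemma nonprop {γ δ : V} (hγ : γ ∈ RS.Φ) (hδ : δ ∈ RS.Φ) (h1 : γ ≠ δ) (h2 : γ ≠ -δ)
    (c : ℚ) : γ ≠ c • δ := by
  intro hc
  rcases RS.reduced δ hδ c (hc ▸ hγ) with rfl | rfl
  · exact h1 (by simpa using hc)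
  · exact h2 (by rw [hc]; module)

lemma strictCS {γ δ : V} (hγ : γ ∈ RS.Φ) (hδ : δ ∈ RS.Φ)
    (hnp : ∀ c : ℚ, γ ≠ c • δ) : (B γ δ) ^ 2 < B γ γ * B δ δ := by
  have hδδ : 0 < B δ δ := RS.posB hδ
  set c : ℚ := B γ δ / B δ δ with hc
  have hw : γ - c • δ ≠ 0 := by
    intro h
    exact hnp c (by rw [← sub_eq_zero]; exact h)
  have hpos : 0 < B (γ - c • δ) (γ - c • δ) := RS.posdef _ hw
  have hexp : B (γ - c • δ) (γ - c • δ)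
      = B γ γ - 2 * c * B γ δ + c ^ 2 * B δ δ := by
    simp only [map_sub, map_smul, LinearMap.sub_apply, LinearMap.smul_apply, smul_eq_mul]
    rw [RS.symm δ γ]
    ring
  rw [hexp, hc] at hpos
  have h1 : B γ γ - (B γ δ) ^ 2 / B δ δ > 0 := by
    have : B γ δ / B δ δ ^ 2 * B δ δ ^ 2 = B γ δ := by field_simp
    field_simp at hpos ⊢
    nlinarith [hpos]
  have := mul_pos h1 hδδ
  have h2 : (B γ γ - B γ δ ^ 2 / B δ δ) * B δ δ = B γ γ * B δ δ - B γ δ ^ 2 := by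
    field_simp
  nlinarith [this, h2]

lemma sub_mem {γ δ : V} (hγ : γ ∈ RS.Φ) (hδ : δ ∈ RS.Φ) (h1 : γ ≠ δ) (h2 : γ ≠ -δ)
    (hB : 0 < B γ δ) : γ - δ ∈ RS.Φ := by
  have hγγ : 0 < B γ γ := RS.posB hγ
  have hδδ : 0 < B δ δ := RS.posB hδ
  obtain ⟨z₁, hz₁⟩ := RS.crystallographic δ hδ γ hγ
  obtain ⟨z₂, hz₂⟩ := RS.crystallographic γ hγ δ hδ
  have hCS := RS.strictCS hγ hδ (RS.nonprop hγ hδ h1 h2)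
  have hz₁pos : (0:ℚ) < z₁ := by
    rw [← hz₁]; positivity
  have hz₂pos : (0:ℚ) < z₂ := by
    rw [← hz₂, RS.symm δ γ]; positivity
  have hz₁1 : (1:ℚ) ≤ z₁ := by exact_mod_cast hz₁pos
  have hz₂1 : (1:ℚ) ≤ z₂ := by exact_mod_cast hz₂pos
  have hprod : (z₁:ℚ) * z₂ < 4 := by
    have : (z₁:ℚ) * z₂ = (2 * B γ δ / B δ δ) * (2 * B δ γ / B γ γ) := by rw [hz₁, hz₂]
    rw [this, RS.symm δ γ]
    rw [div_mul_div_comm]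
    rw [div_lt_iff₀ (by positivity)]
    nlinarith [hCS]
  by_cases hz₁eq : (z₁:ℚ) = 1
  · have := RS.reflect_mem δ hδ γ hγ
    rw [hz₁, hz₁eq, one_smul] at this
    exact this
  · have hz₂eq : (z₂:ℚ) = 1 := by
      have hz₁2 : (2:ℚ) ≤ z₁ := by
        have : (1:ℤ) < z₁ := by
          by_contra h
          push_neg at h
          have : (z₁:ℚ) ≤ 1 := by exact_mod_cast h
          exact hz₁eq (le_antisymm this hz₁1)
        exact_mod_cast this
      by_contra h
      have : (2:ℚ) ≤ z₂ := by
        have : (1:ℤ) < z₂ := by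
          by_contra h'
          push_neg at h'
          have : (z₂:ℚ) ≤ 1 := by exact_mod_cast h'
          exact h (le_antisymm this hz₂1)
        exact_mod_cast this
      nlinarith
    have := RS.reflect_mem γ hγ δ hδ
    rw [hz₂, hz₂eq, one_smul] at this
    have := RS.neg_mem this
    convert this using 1
    module

open Finset in
lemma exists_functional {α : V} (hα : α ∈ RS.Φ) :
    ∃ ℓ : V →ₗ[ℚ] ℚ, (∀ γ ∈ RS.Φ, ℓ γ ≠ 0) ∧ 0 < ℓ α ∧
      ∀ γ ∈ RS.Φ, 0 < ℓ γ → ℓ α ≤ ℓ γ := by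
  classical
  have hαα : 0 < B α α := RS.posB hα
  set Φ' : Finset V := RS.Φ.filter (fun γ => γ ≠ α ∧ γ ≠ -α) with hΦ'
  have hmem' : ∀ γ ∈ Φ', γ ∈ RS.Φ ∧ γ ≠ α ∧ γ ≠ -α := by
    intro γ hγ
    exact Finset.mem_filter.1 hγ |>.imp id id
  set F : V → (V →ₗ[ℚ] ℚ) := fun γ => B γ - (B γ α / B α α) • B α with hF
  have hFne : ∀ γ ∈ Φ', F γ ≠ 0 := by
    intro γ hγ
    obtain ⟨hγΦ, hγ1, hγ2⟩ := hmem' γ hγ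
    set c : ℚ := B γ α / B α α with hc
    have hw : γ - c • α ≠ 0 := by
      intro h
      exact RS.nonprop hγΦ hα hγ1 hγ2 c (by rw [← sub_eq_zero]; exact h)
    have hFw : F γ (γ - c • α) = B (γ - c • α) (γ - c • α) := by
      simp only [hF, LinearMap.sub_apply, LinearMap.smul_apply, smul_eq_mul, map_sub, map_smul]
      try ring
    intro h0
    have := RS.posdef _ hw
    rw [← hFw, h0] at this
    simp at this
  obtain ⟨y, hy⟩ := rcrs_avoid (Φ'.image F) (by
    intro f hf
    obtain ⟨γ, hγ, rfl⟩ := mem_image.1 hf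
    exact hFne γ hγ)
  have hy' : ∀ γ ∈ Φ', F γ y ≠ 0 := fun γ hγ => hy _ (mem_image_of_mem _ hγ)
  clear hy
  -- the minimum scale
  obtain ⟨m, hm0, hm1, hmα⟩ : ∃ m : ℚ, 0 < m ∧ (∀ γ ∈ Φ', m ≤ |F γ y|) ∧ m ≤ B α α := by
    set Q : Finset ℚ := insert (B α α) (Φ'.image (fun γ => |F γ y|)) with hQ
    have hQne : Q.Nonempty := insert_nonempty _ _
    refine ⟨Q.min' hQne, ?_, ?_, ?_⟩
    · have hmem := Q.min'_mem hQne
      rcases mem_insert.1 hmem with h | h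
      · rw [h]; exact hαα
      · obtain ⟨γ, hγ, h⟩ := mem_image.1 h
        rw [← h]
        exact abs_pos.2 (hy' γ hγ)
    · exact fun γ hγ => Q.min'_le _ (mem_insert_of_mem (mem_image_of_mem _ hγ))
    · exact Q.min'_le _ (mem_insert_self _ _)
  obtain ⟨K, hK0, hK2, hK3⟩ : ∃ K : ℚ, 0 < K ∧ (∀ γ ∈ Φ', |B γ α| ≤ K) ∧ B α α ≤ K := by
    have hs : (0:ℚ) ≤ ∑ γ ∈ Φ', |B γ α| := Finset.sum_nonneg (fun _ _ => abs_nonneg _)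
    refine ⟨B α α + ∑ γ ∈ Φ', |B γ α|, by linarith, ?_, by linarith⟩
    intro γ hγ
    have h1 : |B γ α| ≤ ∑ γ ∈ Φ', |B γ α| :=
      Finset.single_le_sum (f := fun γ => |B γ α|) (fun _ _ => abs_nonneg _) hγ
    linarith
  obtain ⟨t, ht0, htb, htα⟩ : ∃ t : ℚ, 0 < t ∧ (∀ γ ∈ Φ', |t * B γ α| ≤ m / 2) ∧
      t * B α α ≤ m / 2 := by
    refine ⟨m / (2 * K), by positivity, ?_, ?_⟩
    · intro γ hγ
      have h1 : |m / (2 * K) * B γ α| = m / (2 * K) * |B γ α| := by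
        rw [abs_mul, abs_of_pos (by positivity)]
      rw [h1, div_mul_eq_mul_div, div_le_div_iff₀ (by positivity) (by norm_num)]
      have := hK2 γ hγ
      nlinarith [abs_nonneg (B γ α)]
    · rw [div_mul_eq_mul_div, div_le_div_iff₀ (by positivity) (by norm_num)]
      nlinarith
  obtain ⟨x₀, hx₀α, hx₀γ⟩ : ∃ x₀ : V, B x₀ α = 0 ∧ ∀ γ ∈ Φ', B x₀ γ = F γ y := by
    refine ⟨y - (B α y / B α α) • α, ?_, ?_⟩
    · simp only [map_sub, map_smul, LinearMap.sub_apply, LinearMap.smul_apply, smul_eq_mul]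
      rw [RS.symm y α]
      field_simp
      ring
    · intro γ hγ
      simp only [hF, map_sub, map_smul, LinearMap.sub_apply, LinearMap.smul_apply, smul_eq_mul]
      rw [RS.symm y γ, RS.symm α γ, RS.symm α y]
      ring
  refine ⟨B x₀ + t • B α, ?_⟩
  have hℓeval : ∀ x, (B x₀ + t • B α) x = B x₀ x + t * B α x := by
    intro x
    simp [LinearMap.add_apply, LinearMap.smul_apply, smul_eq_mul]
  have hℓα : (B x₀ + t • B α) α = t * B α α := by rw [hℓeval, hx₀α]; ring
  have hℓαpos : 0 < (B x₀ + t • B α) α := by rw [hℓα]; positivity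
  have hcase : ∀ γ ∈ RS.Φ, γ ≠ α → γ ≠ -α → γ ∈ Φ' := by
    intro γ hγ h1 h2
    simp [hΦ', hγ, h1, h2]
  have h5 : ∀ γ ∈ Φ', (B x₀ + t • B α) γ = F γ y + t * B γ α := by
    intro γ hγ
    rw [hℓeval, hx₀γ γ hγ, RS.symm α γ]
  refine ⟨?_, hℓαpos, ?_⟩
  · intro γ hγ
    by_cases h1 : γ = α
    · rw [h1]; exact hℓαpos.ne'
    by_cases h2 : γ = -α
    · rw [h2, map_neg]
      intro h
      rw [neg_eq_zero] at h
      exact hℓαpos.ne' h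
    · have hγ' := hcase γ hγ h1 h2
      have h3 := hm1 γ hγ'
      have h4 := htb γ hγ'
      intro h0
      rw [h5 γ hγ'] at h0
      have he : F γ y = -(t * B γ α) := by linarith
      rw [he, abs_neg] at h3
      linarith
  · intro γ hγ hγpos
    by_cases h1 : γ = α
    · rw [h1]
    by_cases h2 : γ = -α
    · exfalso
      rw [h2, map_neg] at hγpos
      linarith
    · have hγ' := hcase γ hγ h1 h2
      have h3 := hm1 γ hγ'
      have h4 := htb γ hγ'
      rw [h5 γ hγ'] at hγpos ⊢
      rcases abs_le.1 h4 with ⟨h4a, h4b⟩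
      rw [hℓα]
      rcases le_or_gt (F γ y) 0 with hF0 | hF0
      · exfalso
        have habs : |F γ y| = -(F γ y) := abs_of_nonpos hF0
        rw [habs] at h3
        linarith
      · have habs : |F γ y| = F γ y := abs_of_pos hF0
        rw [habs] at h3
        linarith

end ReducedCrystRootSystem

/-- No root of a reduced crystallographic root system is divisible by an integer `m > 1`
in the root lattice `ℤΦ`. -/
theorem stmt14 (V : Type*) [AddCommGroup V] [Module ℚ V]
    (B : V →ₗ[ℚ] V →ₗ[ℚ] ℚ) (RS : ReducedCrystRootSystem V B) :
    ∀ α ∈ RS.Φ, ∀ m : ℕ, 1 < m →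
      ∀ β ∈ AddSubgroup.closure (RS.Φ : Set V), α ≠ m • β := by
  classical
  intro α hα m hm β hβ hEq
  obtain ⟨ℓ, hℓ0, hℓα, hℓmin⟩ := RS.exists_functional hα
  set Pos : Finset V := RS.Φ.filter (fun γ => 0 < ℓ γ) with hPosdef
  set Δ : Finset V :=
    Pos.filter (fun δ => ¬∃ b₁ ∈ Pos, ∃ b₂ ∈ Pos, δ = b₁ + b₂) with hΔdef
  have hPosΦ : ∀ γ ∈ Pos, γ ∈ RS.Φ ∧ 0 < ℓ γ := fun γ hγ => Finset.mem_filter.1 hγ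
  have hΔPos : ∀ δ ∈ Δ, δ ∈ Pos := fun δ hδ => (Finset.mem_filter.1 hδ).1
  have hΔprop : ∀ δ ∈ Δ, δ ∈ RS.Φ ∧ 0 < ℓ δ := fun δ hδ => hPosΦ δ (hΔPos δ hδ)
  have hαPos : α ∈ Pos := Finset.mem_filter.2 ⟨hα, hℓα⟩
  have hαΔ : α ∈ Δ := by
    refine Finset.mem_filter.2 ⟨hαPos, ?_⟩
    rintro ⟨b₁, hb₁, b₂, hb₂, heq⟩
    have h1 := hPosΦ b₁ hb₁
    have h2 := hPosΦ b₂ hb₂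
    have hadd : ℓ α = ℓ b₁ + ℓ b₂ := by rw [heq, map_add]
    have h3 := hℓmin b₁ h1.1 h1.2
    have h4 := hℓmin b₂ h2.1 h2.2
    linarith
  have hBneg : ∀ δ₁ ∈ Δ, ∀ δ₂ ∈ Δ, δ₁ ≠ δ₂ → B δ₁ δ₂ ≤ 0 := by
    intro δ₁ hδ₁ δ₂ hδ₂ hne
    by_contra hpos
    push_neg at hpos
    obtain ⟨hδ₁Φ, hδ₁pos⟩ := hΔprop δ₁ hδ₁
    obtain ⟨hδ₂Φ, hδ₂pos⟩ := hΔprop δ₂ hδ₂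
    have hne2 : δ₁ ≠ -δ₂ := by
      intro h
      rw [h, map_neg] at hδ₁pos
      linarith
    have hsub : δ₁ - δ₂ ∈ RS.Φ := RS.sub_mem hδ₁Φ hδ₂Φ hne hne2 hpos
    have hℓsub := hℓ0 _ hsub
    rcases lt_or_gt_of_ne hℓsub with hlt | hgt
    · -- ℓ (δ₁ - δ₂) < 0, so δ₂ = δ₁ + (δ₂ - δ₁) decomposes
      have hsub' : δ₂ - δ₁ ∈ RS.Φ := by
        have := RS.neg_mem hsub
        convert this using 1
        abel
      have hpos' : 0 < ℓ (δ₂ - δ₁) := by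
        have : ℓ (δ₂ - δ₁) = -(ℓ (δ₁ - δ₂)) := by
          rw [← map_neg]
          congr 1
          abel
        rw [this]
        linarith
      exact (Finset.mem_filter.1 hδ₂).2
        ⟨δ₁, hΔPos δ₁ hδ₁, δ₂ - δ₁, Finset.mem_filter.2 ⟨hsub', hpos'⟩, by abel⟩
    · exact (Finset.mem_filter.1 hδ₁).2
        ⟨δ₂, hΔPos δ₂ hδ₂, δ₁ - δ₂, Finset.mem_filter.2 ⟨hsub, hgt⟩, by abel⟩
  -- linear independence of Δ
  have hzero : ∀ c : V → ℚ, (∑ δ ∈ Δ, c δ • δ) = 0 → ∀ δ ∈ Δ, c δ = 0 := by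
    intro c hc
    set P : Finset V := Δ.filter (fun δ => 0 < c δ) with hPdef
    set N : Finset V := Δ.filter (fun δ => c δ < 0) with hNdef
    have hPΔ : ∀ δ ∈ P, δ ∈ Δ := fun δ hδ => (Finset.mem_filter.1 hδ).1
    have hNΔ : ∀ δ ∈ N, δ ∈ Δ := fun δ hδ => (Finset.mem_filter.1 hδ).1
    have hsplit : ∑ δ ∈ P, c δ • δ + ∑ δ ∈ Δ.filter (fun δ => ¬0 < c δ), c δ • δ = 0 := by
      rw [Finset.sum_filter_add_sum_filter_not]
      exact hc
    have hrest : ∑ δ ∈ Δ.filter (fun δ => ¬0 < c δ), c δ • δ = ∑ δ ∈ N, c δ • δ := by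
      symm
      apply Finset.sum_subset
      · intro δ hδ
        obtain ⟨h1, h2⟩ := Finset.mem_filter.1 hδ
        exact Finset.mem_filter.2 ⟨h1, by linarith⟩
      · intro δ hδ hδN
        obtain ⟨h1, h2⟩ := Finset.mem_filter.1 hδ
        have : c δ = 0 := by
          by_contra h3
          rcases lt_or_gt_of_ne h3 with h4 | h4
          · exact hδN (Finset.mem_filter.2 ⟨h1, h4⟩)
          · exact h2 h4
        rw [this, zero_smul]
    have hv : ∑ δ ∈ P, c δ • δ = ∑ δ ∈ N, (-(c δ)) • δ := by
      have h1 : ∑ δ ∈ P, c δ • δ = -∑ δ ∈ Δ.filter (fun δ => ¬0 < c δ), c δ • δ :=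
        eq_neg_of_add_eq_zero_left hsplit
      rw [h1, hrest]
      simp [neg_smul]
    have hBvv : B (∑ δ ∈ P, c δ • δ) (∑ δ ∈ P, c δ • δ)
        = ∑ δ ∈ P, c δ * ∑ δ' ∈ N, -(c δ') * B δ δ' := by
      rw [congrArg (fun w => B (∑ δ ∈ P, c δ • δ) w) hv]
      simp only [map_sum, map_smul, LinearMap.sum_apply, LinearMap.smul_apply,
        smul_eq_mul, Finset.mul_sum]
      rw [Finset.sum_comm]
      refine Finset.sum_congr rfl (fun δ hδ => Finset.sum_congr rfl (fun δ' hδ' => by ring))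
    have hBvv0 : B (∑ δ ∈ P, c δ • δ) (∑ δ ∈ P, c δ • δ) ≤ 0 := by
      rw [hBvv]
      apply Finset.sum_nonpos
      intro δ hδ
      have hδP := Finset.mem_filter.1 hδ
      apply mul_nonpos_of_nonneg_of_nonpos hδP.2.le
      apply Finset.sum_nonpos
      intro δ' hδ'
      have hδ'N := Finset.mem_filter.1 hδ'
      have hne : δ ≠ δ' := by
        intro h
        rw [h] at hδP
        exact absurd hδP.2 (not_lt.2 hδ'N.2.le)
      have hB := hBneg δ hδP.1 δ' hδ'N.1 hne
      nlinarith [hδ'N.2]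
    have hv0 : ∑ δ ∈ P, c δ • δ = 0 := by
      by_contra h
      exact absurd (RS.posdef _ h) (not_lt.2 hBvv0)
    have hPempty : P = ∅ := by
      by_contra h
      obtain ⟨δ₀, hδ₀⟩ := Finset.nonempty_of_ne_empty h
      have hsum : ∑ δ ∈ P, c δ * ℓ δ = 0 := by
        have : ℓ (∑ δ ∈ P, c δ • δ) = 0 := by rw [hv0, map_zero]
        rw [map_sum] at this
        convert this using 1
        exact Finset.sum_congr rfl (fun δ _ => by rw [map_smul, smul_eq_mul])
      have hsumpos : 0 < ∑ δ ∈ P, c δ * ℓ δ := by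
        apply Finset.sum_pos
        · intro δ hδ
          have h1 := Finset.mem_filter.1 hδ
          exact mul_pos h1.2 (hΔprop δ h1.1).2
        · exact ⟨δ₀, hδ₀⟩
      linarith
    have hNempty : N = ∅ := by
      by_contra h
      obtain ⟨δ₀, hδ₀⟩ := Finset.nonempty_of_ne_empty h
      have hv0' : ∑ δ ∈ N, (-(c δ)) • δ = 0 := by rw [← hv]; exact hv0
      have hsum : ∑ δ ∈ N, -(c δ) * ℓ δ = 0 := by
        have : ℓ (∑ δ ∈ N, (-(c δ)) • δ) = 0 := by rw [hv0', map_zero]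
        rw [map_sum] at this
        convert this using 1
        exact Finset.sum_congr rfl (fun δ _ => by rw [map_smul, smul_eq_mul])
      have hsumpos : 0 < ∑ δ ∈ N, -(c δ) * ℓ δ := by
        apply Finset.sum_pos
        · intro δ hδ
          have h1 := Finset.mem_filter.1 hδ
          exact mul_pos (by linarith [h1.2]) (hΔprop δ h1.1).2
        · exact ⟨δ₀, hδ₀⟩
      linarith
    intro δ hδ
    have h1 : δ ∉ P := by rw [hPempty]; exact Finset.notMem_empty δ
    have h2 : δ ∉ N := by rw [hNempty]; exact Finset.notMem_empty δ
    have h3 : ¬0 < c δ := fun h => h1 (Finset.mem_filter.2 ⟨hδ, h⟩)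
    have h4 : ¬c δ < 0 := fun h => h2 (Finset.mem_filter.2 ⟨hδ, h⟩)
    linarith
  -- linear independence
  have hindep : LinearIndependent ℚ (fun x => x : ((Δ : Finset V) : Set V) → V) := by
    refine (linearIndepOn_iff (R := ℚ) (v := (id : V → V)) (s := ((Δ : Finset V) : Set V))).2 ?_
    intro l hl hl0
    have hsupp : l.support ⊆ Δ := by
      rw [Finsupp.mem_supported] at hl
      exact_mod_cast hl
    have hsum : ∑ δ ∈ Δ, l δ • δ = 0 := by
      rw [Finsupp.linearCombination_apply, Finsupp.sum] at hl0
      rw [← hl0]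
      symm
      apply Finset.sum_subset hsupp
      intro δ _ hδ
      rw [Finsupp.notMem_support_iff.1 hδ, zero_smul]
    have hz := hzero (fun δ => l δ) hsum
    ext x
    by_cases hx : x ∈ Δ
    · exact hz x hx
    · exact Finsupp.notMem_support_iff.1 (fun h => hx (hsupp h))
  -- every root lies in the ℤ-span of Δ
  have hcl : ∀ γ ∈ RS.Φ, γ ∈ AddSubgroup.closure ((Δ : Finset V) : Set V) := by
    have key : ∀ n : ℕ, ∀ γ ∈ Pos, (Pos.filter (fun δ => ℓ δ < ℓ γ)).card ≤ n →
        γ ∈ AddSubgroup.closure ((Δ : Finset V) : Set V) := by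
      intro n
      induction n with
      | zero =>
        intro γ hγ hcard
        by_cases hδ : γ ∈ Δ
        · exact AddSubgroup.subset_closure hδ
        · exfalso
          have hdec : ∃ b₁ ∈ Pos, ∃ b₂ ∈ Pos, γ = b₁ + b₂ :=
            not_not.1 (fun h => hδ (Finset.mem_filter.2 ⟨hγ, h⟩))
          obtain ⟨b₁, hb₁, b₂, hb₂, heq⟩ := hdec
          have hlt : ℓ b₁ < ℓ γ := by
            have : ℓ γ = ℓ b₁ + ℓ b₂ := by rw [heq, map_add]
            linarith [(hPosΦ b₂ hb₂).2]
          have hmem : b₁ ∈ Pos.filter (fun δ => ℓ δ < ℓ γ) :=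
            Finset.mem_filter.2 ⟨hb₁, hlt⟩
          have := Finset.card_pos.2 ⟨b₁, hmem⟩
          omega
      | succ n ih =>
        intro γ hγ hcard
        by_cases hδ : γ ∈ Δ
        · exact AddSubgroup.subset_closure hδ
        · have hdec : ∃ b₁ ∈ Pos, ∃ b₂ ∈ Pos, γ = b₁ + b₂ :=
            not_not.1 (fun h => hδ (Finset.mem_filter.2 ⟨hγ, h⟩))
          obtain ⟨b₁, hb₁, b₂, hb₂, heq⟩ := hdec
          have hstep : ∀ b ∈ Pos, ℓ b < ℓ γ →
              (Pos.filter (fun δ => ℓ δ < ℓ b)).card ≤ n := by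
            intro b hb hlt
            have hss : Pos.filter (fun δ => ℓ δ < ℓ b) ⊂
                Pos.filter (fun δ => ℓ δ < ℓ γ) := by
              refine ⟨Finset.filter_subset_filter _ (le_refl Pos) |>.trans ?_, ?_⟩
              · intro x hx
                obtain ⟨h1, h2⟩ := Finset.mem_filter.1 hx
                exact Finset.mem_filter.2 ⟨h1, lt_trans h2 hlt⟩
              · intro hsub
                have hb' : b ∈ Pos.filter (fun δ => ℓ δ < ℓ γ) :=
                  Finset.mem_filter.2 ⟨hb, hlt⟩
                have := Finset.mem_filter.1 (hsub hb')
                exact absurd this.2 (lt_irrefl _)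
            have := Finset.card_lt_card hss
            omega
          have hlt₁ : ℓ b₁ < ℓ γ := by
            have : ℓ γ = ℓ b₁ + ℓ b₂ := by rw [heq, map_add]
            linarith [(hPosΦ b₂ hb₂).2]
          have hlt₂ : ℓ b₂ < ℓ γ := by
            have : ℓ γ = ℓ b₁ + ℓ b₂ := by rw [heq, map_add]
            linarith [(hPosΦ b₁ hb₁).2]
          rw [heq]
          exact AddSubgroup.add_mem _ (ih b₁ hb₁ (hstep b₁ hb₁ hlt₁))
            (ih b₂ hb₂ (hstep b₂ hb₂ hlt₂))
    intro γ hγ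
    by_cases hpos : 0 < ℓ γ
    · exact key _ γ (Finset.mem_filter.2 ⟨hγ, hpos⟩) le_rfl
    · have hneg : 0 < ℓ (-γ) := by
        rw [map_neg]
        rcases lt_or_gt_of_ne (hℓ0 γ hγ) with h | h
        · linarith
        · exact absurd h hpos
      have h1 := key _ (-γ) (Finset.mem_filter.2 ⟨RS.neg_mem hγ, hneg⟩) le_rfl
      have h2 := AddSubgroup.neg_mem _ h1
      simpa using h2
  -- the coordinate functional at α
  have hαset : α ∈ ((Δ : Finset V) : Set V) := Finset.mem_coe.2 hαΔ
  have hαext : α ∈ (show LinearIndepOn ℚ id ((Δ : Finset V) : Set V) from hindep).extend (Set.subset_univ _) :=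
    (show LinearIndepOn ℚ id ((Δ : Finset V) : Set V) from hindep).subset_extend _ hαset
  set b := Module.Basis.extend hindep with hbdef
  set f : V →ₗ[ℚ] ℚ := b.coord ⟨α, hαext⟩ with hfdef
  have hfα : f α = 1 := by
    have h1 : α = b ⟨α, hαext⟩ := (Module.Basis.extend_apply_self hindep ⟨α, hαext⟩).symm
    rw [hfdef, Module.Basis.coord_apply]
    nth_rewrite 1 [h1]
    rw [Module.Basis.repr_self, Finsupp.single_eq_same]
  have hfδ : ∀ δ ∈ Δ, δ ≠ α → f δ = 0 := by
    intro δ hδ hne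
    have hδext : δ ∈ (show LinearIndepOn ℚ id ((Δ : Finset V) : Set V) from hindep).extend (Set.subset_univ _) :=
      (show LinearIndepOn ℚ id ((Δ : Finset V) : Set V) from hindep).subset_extend _ (Finset.mem_coe.2 hδ)
    have h1 : δ = b ⟨δ, hδext⟩ := (Module.Basis.extend_apply_self hindep ⟨δ, hδext⟩).symm
    rw [hfdef, Module.Basis.coord_apply]
    nth_rewrite 1 [h1]
    rw [Module.Basis.repr_self]
    exact Finsupp.single_eq_of_ne (by simpa [Subtype.ext_iff] using hne.symm)
  have hint : ∀ δ ∈ ((Δ : Finset V) : Set V), f δ ∈ AddSubgroup.zmultiples (1 : ℚ) := by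
    intro δ hδ
    rw [AddSubgroup.mem_zmultiples_iff]
    by_cases h : δ = α
    · exact ⟨1, by rw [h, hfα]; simp⟩
    · exact ⟨0, by rw [hfδ δ (Finset.mem_coe.1 hδ) h]; simp⟩
  have hβint : f β ∈ AddSubgroup.zmultiples (1 : ℚ) := by
    have h1 : AddSubgroup.closure (RS.Φ : Set V) ≤
        AddSubgroup.comap f.toAddMonoidHom (AddSubgroup.zmultiples (1 : ℚ)) := by
      rw [AddSubgroup.closure_le]
      intro γ hγ
      have h2 : γ ∈ AddSubgroup.closure ((Δ : Finset V) : Set V) := hcl γ hγ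
      have h3 : AddSubgroup.closure ((Δ : Finset V) : Set V) ≤
          AddSubgroup.comap f.toAddMonoidHom (AddSubgroup.zmultiples (1 : ℚ)) := by
        rw [AddSubgroup.closure_le]
        intro δ hδ
        exact hint δ hδ
      exact h3 h2
    exact h1 hβ
  obtain ⟨k, hk⟩ := AddSubgroup.mem_zmultiples_iff.1 hβint
  have hk' : f β = (k : ℚ) := by
    rw [← hk, zsmul_eq_mul, mul_one]
  have hmain : (1 : ℚ) = (m : ℚ) * (k : ℚ) := by
    have h1 : f α = f (m • β) := by rw [hEq]
    rw [hfα, map_nsmul, hk', nsmul_eq_mul] at h1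
    exact h1
  have hz : (m : ℤ) * k = 1 := by exact_mod_cast hmain.symm
  have hle : (m : ℤ) ≤ 1 := Int.le_of_dvd one_pos ⟨k, hz.symm⟩
  have : m ≤ 1 := by exact_mod_cast hle
  omega
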